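/- For every integer p ≥ 1, the finite subgroup L_{1/p} = {(a/p, c/p) mod ℤ² : a, c ∈ ℤ} of the torus ℝ²/ℤ² is the disjoint union, over the positive divisors d of p, of the SL(2,ℤ)-orbits O_{1/d} of the points (0, 1/d) mod ℤ². -/

import Mathlib

/-- The integer lattice `ℤ² ⊂ ℝ²`, as an additive subgroup of `Fin 2 → ℝ`. -/
def intLattice : AddSubgroup (Fin 2 → ℝ) where
  carrier := {v | ∀ i, ∃ n : ℤ, v i = (n : ℝ)}
  zero_mem' := fun i => ⟨0, by simp⟩
  add_mem' := by
    intro a b ha hb i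
    obtain ⟨n, hn⟩ := ha i
    obtain ⟨m, hm⟩ := hb i
    exact ⟨n + m, by simp [hn, hm]⟩
  neg_mem' := by
    intro a ha i
    obtain ⟨n, hn⟩ := ha i
    exact ⟨-n, by simp [hn]⟩

/-- The torus `ℝ²/ℤ²`. -/
abbrev Torus : Type := (Fin 2 → ℝ) ⧸ intLattice

/-- The natural action of `SL(2,ℤ)` on `ℝ²` by matrix multiplication on column vectors. -/
noncomputable def sl2zAct (A : Matrix.SpecialLinearGroup (Fin 2) ℤ) (v : Fin 2 → ℝ) :
    Fin 2 → ℝ :=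
  ((A : Matrix (Fin 2) (Fin 2) ℤ).map fun n => (n : ℝ)).mulVec v

/-- The `SL(2,ℤ)`-orbit of the torus point represented by `v ∈ ℝ²`. -/
def torusOrbit (v : Fin 2 → ℝ) : Set Torus :=
  {x | ∃ A : Matrix.SpecialLinearGroup (Fin 2) ℤ,
    (QuotientAddGroup.mk (sl2zAct A v) : Torus) = x}

/-- The `p`-torsion subgroup `L_{1/p} = {(a/p, c/p) mod ℤ²}` of the torus, as a set. -/
def torsionSet (p : ℕ) : Set Torus :=
  {x | ∃ a c : ℤ, (QuotientAddGroup.mk ![(a : ℝ) / p, (c : ℝ) / p] : Torus) = x}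


/-- joint coprimality of a triple, in Bezout form -/
def Trip (a c d : ℤ) : Prop := ∃ u v w : ℤ, u * a + v * c + w * d = 1

lemma mk_eq_mk {v w : Fin 2 → ℝ} :
    (QuotientAddGroup.mk v : Torus) = QuotientAddGroup.mk w ↔
      (∃ m : ℤ, w 0 - v 0 = (m : ℝ)) ∧ (∃ n : ℤ, w 1 - v 1 = (n : ℝ)) := by
  rw [QuotientAddGroup.eq]
  constructor
  · intro h
    refine ⟨?_, ?_⟩
    · obtain ⟨m, hm⟩ := h 0
      exact ⟨m, by simpa [sub_eq_iff_eq_add, neg_add_eq_sub] using hm⟩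
    · obtain ⟨n, hn⟩ := h 1
      exact ⟨n, by simpa [sub_eq_iff_eq_add, neg_add_eq_sub] using hn⟩
  · rintro ⟨⟨m, hm⟩, ⟨n, hn⟩⟩ i
    fin_cases i
    · exact ⟨m, by simpa [neg_add_eq_sub] using hm⟩
    · exact ⟨n, by simpa [neg_add_eq_sub] using hn⟩

lemma frac_eq_iff {d d' : ℕ} (hd : 0 < d) (hd' : 0 < d') (a c a' c' : ℤ) :
    (QuotientAddGroup.mk ![(a : ℝ) / d, (c : ℝ) / d] : Torus) =
      QuotientAddGroup.mk ![(a' : ℝ) / d', (c' : ℝ) / d'] ↔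
      ((d : ℤ) * d') ∣ (a' * d - a * d') ∧ ((d : ℤ) * d') ∣ (c' * d - c * d') := by
  have hdR : (d : ℝ) ≠ 0 := Nat.cast_ne_zero.2 hd.ne'
  have hdR' : (d' : ℝ) ≠ 0 := Nat.cast_ne_zero.2 hd'.ne'
  rw [mk_eq_mk]
  have key : ∀ x y : ℤ, (∃ m : ℤ, (y : ℝ) / d' - (x : ℝ) / d = (m : ℝ)) ↔
      ((d : ℤ) * d') ∣ (y * d - x * d') := by
    intro x y
    constructor
    · rintro ⟨m, hm⟩
      refine ⟨m, ?_⟩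
      have : (y : ℝ) * d - x * d' = (d * d') * m := by
        field_simp at hm
        linear_combination hm
      exact_mod_cast this
    · rintro ⟨m, hm⟩
      refine ⟨m, ?_⟩
      have hR : (y : ℝ) * d - x * d' = (d : ℝ) * d' * m := by exact_mod_cast hm
      field_simp
      linear_combination hR
  simp only [Matrix.cons_val_zero, Matrix.cons_val_one, Matrix.head_cons]
  rw [key a a', key c c']

lemma lift_coprime {a c d : ℤ} (h : Trip a c d) :
    ∃ b e : ℤ, IsCoprime b e ∧ d ∣ b - a ∧ d ∣ e - c := by
  obtain ⟨u, v, w, huvw⟩ := h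
  by_cases ha : a = 0
  · refine ⟨a + d, c, ?_, ⟨1, by ring⟩, ⟨0, by ring⟩⟩
    subst ha
    exact ⟨w, v, by linarith [huvw]⟩
  · set l : ℕ := (a.natAbs.primeFactors.filter (fun q : ℕ => ¬((q : ℤ) ∣ c))).prod id with hl
    refine ⟨a, c + (l : ℤ) * d, ?_, ⟨0, by ring⟩, ⟨(l : ℤ), by ring⟩⟩
    rw [Int.isCoprime_iff_gcd_eq_one]
    by_contra hg
    obtain ⟨p, pp, hpdvd⟩ := Nat.exists_prime_and_dvd hg
    have hpa : (p : ℤ) ∣ a := by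
      have : (p : ℤ).natAbs ∣ a.natAbs := by
        simpa using hpdvd.trans (Nat.gcd_dvd_left _ _)
      exact Int.natAbs_dvd_natAbs.mp this
    have hpe : (p : ℤ) ∣ c + (l : ℤ) * d := by
      have : (p : ℤ).natAbs ∣ (c + (l : ℤ) * d).natAbs := by
        simpa using hpdvd.trans (Nat.gcd_dvd_right _ _)
      exact Int.natAbs_dvd_natAbs.mp this
    have ppz : Prime (p : ℤ) := Nat.prime_iff_prime_int.mp pp
    by_cases hpc : (p : ℤ) ∣ c
    · -- p divides a and c, so p ∤ d, and p ∤ l; but p ∣ l*d, contradiction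
      have hpd : ¬ (p : ℤ) ∣ d := by
        intro hpd
        have h1 : (p : ℤ) ∣ 1 := huvw ▸ dvd_add (dvd_add (hpa.mul_left u) (hpc.mul_left v))
          (hpd.mul_left w)
        have h2 : (p : ℤ) = 1 := Int.eq_one_of_dvd_one (by positivity) h1
        have : p = 1 := by exact_mod_cast h2
        exact pp.one_lt.ne' this
      have hpl : ¬ (p : ℤ) ∣ (l : ℤ) := by
        intro hplz
        have hpln : p ∣ l := by exact_mod_cast hplz
        rw [hl] at hpln
        obtain ⟨q, hq, hpq⟩ := (pp.prime.dvd_finset_prod_iff id).mp hpln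
        have hq' := Finset.mem_filter.mp hq
        have : p = q := (Nat.prime_dvd_prime_iff_eq pp
          (Nat.prime_of_mem_primeFactors hq'.1)).mp hpq
        exact hq'.2 (this ▸ hpc)
      have : (p : ℤ) ∣ (l : ℤ) * d := (dvd_add_right hpc).mp hpe
      rcases ppz.dvd_mul.mp this with h' | h'
      · exact hpl h'
      · exact hpd h'
    · -- p ∣ a, p ∤ c: then p ∣ l, so p ∣ l*d, so p ∣ c, contradiction
      have hmem : p ∈ a.natAbs.primeFactors.filter (fun q : ℕ => ¬((q : ℤ) ∣ c)) := by
        refine Finset.mem_filter.mpr ⟨?_, hpc⟩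
        refine Nat.mem_primeFactors.mpr ⟨pp, ?_, Int.natAbs_ne_zero.mpr ha⟩
        simpa using Int.natAbs_dvd_natAbs.mpr hpa
      have hpl : (p : ℤ) ∣ (l : ℤ) := by
        exact_mod_cast Finset.dvd_prod_of_mem id hmem
      have : (p : ℤ) ∣ c := (dvd_add_right (hpl.mul_right d)).mp (by rwa [add_comm] at hpe)
      exact hpc this

lemma sl2_act_frac (A : Matrix.SpecialLinearGroup (Fin 2) ℤ) (d : ℕ) :
    sl2zAct A ![0, 1 / (d : ℝ)] =
      ![((A : Matrix (Fin 2) (Fin 2) ℤ) 0 1 : ℝ) / d,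
        ((A : Matrix (Fin 2) (Fin 2) ℤ) 1 1 : ℝ) / d] := by
  funext i
  fin_cases i <;>
    simp [sl2zAct, Matrix.mulVec, dotProduct, Fin.sum_univ_two, div_eq_mul_inv,
      mul_comm]

lemma exists_sl2 {b e : ℤ} (h : IsCoprime b e) :
    ∃ A : Matrix.SpecialLinearGroup (Fin 2) ℤ,
      (A : Matrix (Fin 2) (Fin 2) ℤ) 0 1 = b ∧ (A : Matrix (Fin 2) (Fin 2) ℤ) 1 1 = e := by
  obtain ⟨u, v, huv⟩ := h
  refine ⟨⟨!![v, b; -u, e], ?_⟩, by simp, by simp⟩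
  rw [Matrix.det_fin_two_of]
  linarith [huv]

lemma orbit_char {d : ℕ} (hd : 0 < d) (x : Torus) :
    x ∈ torusOrbit ![0, 1 / (d : ℝ)] ↔
      ∃ a c : ℤ, Trip a c (d : ℤ) ∧
        (QuotientAddGroup.mk ![(a : ℝ) / d, (c : ℝ) / d] : Torus) = x := by
  constructor
  · rintro ⟨A, rfl⟩
    refine ⟨(A : Matrix (Fin 2) (Fin 2) ℤ) 0 1, (A : Matrix (Fin 2) (Fin 2) ℤ) 1 1, ?_, ?_⟩
    · refine ⟨-((A : Matrix (Fin 2) (Fin 2) ℤ) 1 0), (A : Matrix (Fin 2) (Fin 2) ℤ) 0 0, 0, ?_⟩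
      have hdet := A.2
      rw [Matrix.det_fin_two] at hdet
      linarith [hdet]
    · rw [sl2_act_frac]
  · rintro ⟨a, c, htrip, rfl⟩
    obtain ⟨b, e, hbe, ⟨k, hk⟩, ⟨m, hm⟩⟩ := lift_coprime htrip
    obtain ⟨A, hA01, hA11⟩ := exists_sl2 hbe
    refine ⟨A, ?_⟩
    rw [sl2_act_frac, hA01, hA11]
    rw [frac_eq_iff hd hd]
    constructor
    · exact ⟨-k, by linear_combination (-(d : ℤ)) * hk⟩
    · exact ⟨-m, by linear_combination (-(d : ℤ)) * hm⟩

lemma dvd_helper {d d' a c : ℤ} (ht : Trip a c d) (h1 : d ∣ a * d') (h2 : d ∣ c * d') :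
    d ∣ d' := by
  obtain ⟨u, v, w, huvw⟩ := ht
  have : d' = u * (a * d') + v * (c * d') + w * (d * d') := by linear_combination (-d') * huvw
  rw [this]
  exact dvd_add (dvd_add (h1.mul_left u) (h2.mul_left v)) ((dvd_mul_right d d').mul_left w)


/-- `L_{1/p}` is the disjoint union, over the positive divisors `d` of `p`, of the
`SL(2,ℤ)`-orbits `O_{1/d}` of the points `(0, 1/d) mod ℤ²`. -/
theorem torsion_eq_disjoint_union_orbits (p : ℕ) (hp : 1 ≤ p) :
    (torsionSet p = ⋃ d ∈ Nat.divisors p, torusOrbit ![0, 1 / (d : ℝ)]) ∧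
      (Nat.divisors p : Set ℕ).Pairwise fun d d' =>
        Disjoint (torusOrbit ![0, 1 / (d : ℝ)]) (torusOrbit ![0, 1 / (d' : ℝ)]) := by
  have hp0 : 0 < p := hp
  constructor
  · ext x
    simp only [Set.mem_iUnion, exists_prop]
    constructor
    · rintro ⟨a, c, rfl⟩
      set G : ℕ := Int.gcd c (p : ℤ) with hG
      set g : ℕ := Int.gcd a (G : ℤ) with hg
      have hga : (g : ℤ) ∣ a := Int.gcd_dvd_left _ _
      have hgG : (g : ℤ) ∣ (G : ℤ) := Int.gcd_dvd_right _ _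
      have hGc : (G : ℤ) ∣ c := Int.gcd_dvd_left _ _
      have hGp : (G : ℤ) ∣ (p : ℤ) := Int.gcd_dvd_right _ _
      have hgc : (g : ℤ) ∣ c := hgG.trans hGc
      have hgp' : g ∣ p := by exact_mod_cast hgG.trans hGp
      have hg0 : g ≠ 0 := by
        rintro h
        rw [h] at hgp'
        exact hp0.ne' (Nat.eq_zero_of_zero_dvd hgp')
      set d : ℕ := p / g with hd
      have hdp : d ∣ p := Nat.div_dvd_of_dvd hgp'
      have hpd : p = g * d := (Nat.mul_div_cancel' hgp').symm
      have hd0 : 0 < d := Nat.pos_of_ne_zero (by rintro h; rw [h, mul_zero] at hpd; omega)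
      set a₁ : ℤ := a / g with ha₁
      set c₁ : ℤ := c / g with hc₁
      have haa : a = (g : ℤ) * a₁ := (Int.mul_ediv_cancel' hga).symm
      have hcc : c = (g : ℤ) * c₁ := (Int.mul_ediv_cancel' hgc).symm
      have hppz : (p : ℤ) = (g : ℤ) * d := by exact_mod_cast hpd
      have htrip : Trip a₁ c₁ (d : ℤ) := by
        have h1 : (g : ℤ) = a * Int.gcdA a (G : ℤ) + (G : ℤ) * Int.gcdB a (G : ℤ) :=
          Int.gcd_eq_gcd_ab a (G : ℤ)
        have h2 : (G : ℤ) = c * Int.gcdA c (p : ℤ) + (p : ℤ) * Int.gcdB c (p : ℤ) :=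
          Int.gcd_eq_gcd_ab c (p : ℤ)
        set X := Int.gcdA a (G : ℤ)
        set Y := Int.gcdB a (G : ℤ)
        set S := Int.gcdA c (p : ℤ)
        set T := Int.gcdB c (p : ℤ)
        refine ⟨X, S * Y, T * Y, ?_⟩
        have hgz : (g : ℤ) ≠ 0 := by exact_mod_cast hg0
        have key : (g : ℤ) * 1 = (g : ℤ) * (X * a₁ + S * Y * c₁ + T * Y * (d : ℤ)) := by
          linear_combination h1 + Y * h2 + X * haa + (S * Y) * hcc + (T * Y) * hppz
        have := mul_left_cancel₀ hgz key
        linarith [this]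
      refine ⟨d, Nat.mem_divisors.mpr ⟨hdp, hp0.ne'⟩, ?_⟩
      rw [orbit_char hd0]
      refine ⟨a₁, c₁, htrip, ?_⟩
      rw [frac_eq_iff hd0 hp0]
      constructor
      · refine ⟨0, ?_⟩
        rw [haa, hppz]; ring
      · refine ⟨0, ?_⟩
        rw [hcc, hppz]; ring
    · rintro ⟨d, hdmem, hx⟩
      have hd0 : 0 < d := Nat.pos_of_mem_divisors hdmem
      have hdp : d ∣ p := (Nat.mem_divisors.mp hdmem).1
      rw [orbit_char hd0] at hx
      obtain ⟨a, c, -, rfl⟩ := hx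
      obtain ⟨e, he⟩ := hdp
      refine ⟨a * e, c * e, ?_⟩
      rw [frac_eq_iff hp0 hd0]
      have hez : (p : ℤ) = (d : ℤ) * e := by exact_mod_cast he
      exact ⟨⟨0, by rw [hez]; ring⟩, ⟨0, by rw [hez]; ring⟩⟩
  · intro d hd d' hd' hne
    simp only [Finset.mem_coe] at hd hd'
    have hd0 : 0 < d := Nat.pos_of_mem_divisors hd
    have hd0' : 0 < d' := Nat.pos_of_mem_divisors hd'
    rw [Set.disjoint_left]
    intro x hx hx'
    rw [orbit_char hd0] at hx
    rw [orbit_char hd0'] at hx'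
    obtain ⟨a, c, ht, rfl⟩ := hx
    obtain ⟨a', c', ht', heq⟩ := hx'
    rw [frac_eq_iff hd0' hd0] at heq
    obtain ⟨⟨m, hm⟩, ⟨n, hn⟩⟩ := heq
    -- hm : a * d' - a' * d = d' * d * m ; hn : c * d' - c' * d = d' * d * n
    have h1 : (d : ℤ) ∣ a * d' := ⟨a' + d' * m, by linarith [hm]⟩
    have h2 : (d : ℤ) ∣ c * d' := ⟨c' + d' * n, by linarith [hn]⟩
    have h1' : (d' : ℤ) ∣ a' * d := ⟨a - d * m, by linarith [hm]⟩
    have h2' : (d' : ℤ) ∣ c' * d := ⟨c - d * n, by linarith [hn]⟩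
    have e1 : (d : ℤ) ∣ (d' : ℤ) := dvd_helper ht h1 h2
    have e2 : (d' : ℤ) ∣ (d : ℤ) := dvd_helper ht' h1' h2'
    exact hne (Nat.dvd_antisymm (by exact_mod_cast e1) (by exact_mod_cast e2))
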